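/- Let (η_n) be a sequence of continuous functions η_n : Γ → [0,∞) on the two-dimensional flat torus Γ converging uniformly on Γ to a function η, and suppose there is M > 0 such that for every n the function ln η_n is integrable on Γ with ∫_Γ |ln η_n| ≤ M. Then the set {x ∈ Γ : η(x) = 0} has Lebesgue measure zero, and ln η is integrable on Γ. -/

import Mathlib

open MeasureTheory Real Set Filter
open scoped ENNReal Topology

noncomputable section

/-- Fundamental domain of the two-dimensional flat torus `Γ = (ℝ/ℤ)²`. -/
def Tfund : Set (ℝ × ℝ) := Set.Ioo (0 : ℝ) 1 ×ˢ Set.Ioo (0 : ℝ) 1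

/-- A function on `ℝ²` represents a function on the torus iff it is
`1`-periodic in each variable. -/
def PeriodicTorus (f : ℝ × ℝ → ℝ) : Prop :=
  (∀ x y : ℝ, f (x + 1, y) = f (x, y)) ∧ (∀ x y : ℝ, f (x, y + 1) = f (x, y))

/-- `|ln g|` as an extended-real-valued function (equal to `∞` where `g = 0`). -/
def absLogE (g : ℝ × ℝ → ℝ) (q : ℝ × ℝ) : ℝ≥0∞ :=
  if g q = 0 then ⊤ else ENNReal.ofReal |Real.log (g q)|

lemma measurable_absLogE {g : ℝ × ℝ → ℝ} (hg : Measurable g) :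
    Measurable (absLogE g) := by
  unfold absLogE
  exact Measurable.ite (hg (measurableSet_singleton 0)) measurable_const
    (ENNReal.measurable_ofReal.comp (Real.measurable_log.comp hg).abs)

lemma tendsto_absLogE (ηs : ℕ → ℝ × ℝ → ℝ) (η : ℝ × ℝ → ℝ)
    (hnonneg : ∀ n q, 0 ≤ ηs n q)
    (hconv : TendstoUniformly ηs η atTop) (q : ℝ × ℝ) :
    Tendsto (fun n => absLogE (ηs n) q) atTop (𝓝 (absLogE η q)) := by
  have hpt : Tendsto (fun n => ηs n q) atTop (𝓝 (η q)) := hconv.tendsto_at q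
  by_cases h0 : η q = 0
  · -- tends to ⊤
    rw [show absLogE η q = ⊤ by simp [absLogE, h0], ENNReal.tendsto_nhds_top_iff_nnreal]
    intro x
    have hε : (0 : ℝ) < Real.exp (-((x : ℝ) + 1)) := Real.exp_pos _
    have : ∀ᶠ n in atTop, ηs n q < Real.exp (-((x : ℝ) + 1)) := by
      have := hpt.eventually (eventually_lt_nhds (by rw [h0]; exact hε))
      exact this
    filter_upwards [this] with n hn
    by_cases hz : ηs n q = 0
    · simp [absLogE, hz]
    · have hpos : 0 < ηs n q := lt_of_le_of_ne (hnonneg n q) (Ne.symm hz)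
      have hlog : Real.log (ηs n q) < -((x : ℝ) + 1) := by
        calc Real.log (ηs n q) < Real.log (Real.exp (-((x : ℝ) + 1))) :=
              Real.log_lt_log hpos hn
          _ = -((x : ℝ) + 1) := Real.log_exp _
      have habs : (x : ℝ) + 1 ≤ |Real.log (ηs n q)| := by
        rw [abs_of_neg (lt_trans hlog (by linarith [x.coe_nonneg]))]
        linarith
      simp only [absLogE, if_neg hz]
      calc (x : ℝ≥0∞) < ENNReal.ofReal ((x : ℝ) + 1) := by
            rw [show ((x : ℝ≥0∞)) = ENNReal.ofReal (x : ℝ) by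
              simp [ENNReal.ofReal_coe_nnreal]]
            exact ENNReal.ofReal_lt_ofReal_iff_of_nonneg x.coe_nonneg |>.mpr (by linarith)
        _ ≤ ENNReal.ofReal |Real.log (ηs n q)| := ENNReal.ofReal_le_ofReal habs
  · have hpos : 0 < η q := by
      rcases lt_or_eq_of_le (ge_of_tendsto' hpt (fun n => hnonneg n q)) with h | h
      · exact h
      · exact absurd h.symm h0
    have hev : ∀ᶠ n in atTop, 0 < ηs n q :=
      hpt.eventually (eventually_gt_nhds hpos)
    have hcongr : ∀ᶠ n in atTop,
        ENNReal.ofReal |Real.log (ηs n q)| = absLogE (ηs n) q := by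
      filter_upwards [hev] with n hn
      rw [absLogE, if_neg hn.ne']
    have htend : Tendsto (fun n => ENNReal.ofReal |Real.log (ηs n q)|) atTop
        (𝓝 (ENNReal.ofReal |Real.log (η q)|)) := by
      exact (ENNReal.continuous_ofReal.tendsto _).comp
        ((continuous_abs.tendsto _).comp
          (((Real.continuousAt_log h0).tendsto).comp hpt))
    rw [show absLogE η q = ENNReal.ofReal |Real.log (η q)| by rw [absLogE, if_neg h0]]
    exact htend.congr' hcongr

/-- If continuous `η_n ≥ 0` on the torus converge uniformly to `η` and
`∫_Γ |ln η_n| ≤ M` for all `n`, then `{η = 0}` has measure zero and `ln η` is integrable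
on the torus. -/
theorem limit_log_integrable
    (ηs : ℕ → ℝ × ℝ → ℝ) (η : ℝ × ℝ → ℝ)
    (hcont : ∀ n, Continuous (ηs n)) (hnonneg : ∀ n q, 0 ≤ ηs n q)
    (hper : ∀ n, PeriodicTorus (ηs n))
    (hconv : TendstoUniformly ηs η atTop)
    (M : ℝ) (hM : 0 < M)
    (hint : ∀ n, (∫⁻ q in Tfund, absLogE (ηs n) q) ≤ ENNReal.ofReal M) :
    volume (Tfund ∩ {q | η q = 0}) = 0 ∧
      IntegrableOn (fun q => Real.log (η q)) Tfund := by
  have hηcont : Continuous η := hconv.continuous (Eventually.of_forall hcont).frequently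
  have hηmeas : Measurable η := hηcont.measurable
  have hmeasn : ∀ n, Measurable (absLogE (ηs n)) :=
    fun n => measurable_absLogE (hcont n).measurable
  have hpt : ∀ q, Tendsto (fun n => absLogE (ηs n) q) atTop (𝓝 (absLogE η q)) :=
    tendsto_absLogE ηs η hnonneg hconv
  have hlim : (∫⁻ q in Tfund, absLogE η q) ≤ ENNReal.ofReal M := by
    have h1 : (∫⁻ q in Tfund, absLogE η q)
        = ∫⁻ q in Tfund, liminf (fun n => absLogE (ηs n) q) atTop :=
      lintegral_congr fun q => ((hpt q).liminf_eq).symm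
    rw [h1]
    calc (∫⁻ q in Tfund, liminf (fun n => absLogE (ηs n) q) atTop)
        ≤ liminf (fun n => ∫⁻ q in Tfund, absLogE (ηs n) q) atTop :=
          lintegral_liminf_le hmeasn
      _ ≤ ENNReal.ofReal M :=
          liminf_le_of_frequently_le' ((Eventually.of_forall hint).frequently)
  have hfin : (∫⁻ q in Tfund, absLogE η q) ≠ ⊤ :=
    (lt_of_le_of_lt hlim ENNReal.ofReal_lt_top).ne
  have hae : ∀ᵐ q ∂(volume.restrict Tfund), absLogE η q < ⊤ :=
    ae_lt_top (measurable_absLogE hηmeas) hfin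
  have hae0 : ∀ᵐ q ∂(volume.restrict Tfund), η q ≠ 0 := by
    filter_upwards [hae] with q hq
    intro h0
    rw [absLogE, if_pos h0] at hq
    exact lt_irrefl _ hq
  constructor
  · have hms : MeasurableSet {q : ℝ × ℝ | η q = 0} := hηmeas (measurableSet_singleton 0)
    rw [Set.inter_comm, ← Measure.restrict_apply hms]
    have h := ae_iff.mp hae0
    simpa [not_not] using h
  · refine ⟨(Real.measurable_log.comp hηmeas).aestronglyMeasurable, ?_⟩
    rw [hasFiniteIntegral_iff_norm]
    have : (∫⁻ q in Tfund, ENNReal.ofReal ‖Real.log (η q)‖)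
        = ∫⁻ q in Tfund, absLogE η q := by
      refine lintegral_congr_ae ?_
      filter_upwards [hae0] with q hq
      rw [absLogE, if_neg hq, Real.norm_eq_abs]
    rw [this]
    exact lt_of_le_of_lt hlim ENNReal.ofReal_lt_top
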